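/- For every natural number p and every real λ with |λ| < 1, one has Σ_{n=0}^∞ (n)_{p,λ} T_n(1) = Σ_{k=0}^p S_{2,λ}(p,k) ((1)_{k+1,λ}/(k+1)) (1+λ)^{−(k+1)} e_λ(1), where the series on the left converges. -/

import Mathlib

noncomputable section

/-- Generalized falling factorial `(x)_{n,λ} = x(x-λ)⋯(x-(n-1)λ)`, with `(x)_{0,λ} = 1`. -/
def dff (lam x : ℝ) (n : ℕ) : ℝ := ∏ i ∈ Finset.range n, (x - i * lam)

/-- Degenerate exponential `e_λ(y) = ∑_{n=0}^∞ (1)_{n,λ} y^n / n!`. -/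
def dexp (lam y : ℝ) : ℝ := ∑' n : ℕ, dff lam 1 n * y ^ n / n.factorial

/-- Truncated degenerate exponential tail
`T_n(y) = e_λ(y) - ∑_{k=0}^n (1)_{k,λ} y^k / k!`. -/
def dtail (lam y : ℝ) (n : ℕ) : ℝ :=
  dexp lam y - ∑ k ∈ Finset.range (n + 1), dff lam 1 k * y ^ k / k.factorial

/-- Degenerate Stirling number of the second kind
`S_{2,λ}(n,k) = (1/k!) ∑_{j=0}^k (-1)^{k-j} C(k,j) (j)_{n,λ}`. -/
def dStirling (lam : ℝ) (n k : ℕ) : ℝ :=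
  (1 / (k.factorial : ℝ)) *
    ∑ j ∈ Finset.range (k + 1), (-1 : ℝ) ^ (k - j) * (k.choose j : ℝ) * dff lam j n

lemma dff_zero (lam x : ℝ) : dff lam x 0 = 1 := by simp [dff]

lemma dff_succ (lam x : ℝ) (n : ℕ) : dff lam x (n+1) = dff lam x n * (x - n * lam) := by
  simp [dff, Finset.prod_range_succ]

lemma dff_succ' (lam x : ℝ) (n : ℕ) : dff lam x (n+1) = x * dff lam (x - lam) n := by
  unfold dff
  rw [Finset.prod_range_succ']
  have h : ∀ i ∈ Finset.range n, (x - (((i+1):ℕ):ℝ) * lam) = ((x - lam) - i * lam) := by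
    intro i _; push_cast; ring
  rw [Finset.prod_congr rfl h]
  push_cast; ring

lemma dff_add (lam x : ℝ) (a b : ℕ) :
    dff lam x (a + b) = dff lam x a * dff lam (x - a * lam) b := by
  unfold dff
  rw [Finset.prod_range_add]
  congr 1
  apply Finset.prod_congr rfl
  intro i _
  push_cast
  ring

lemma summable_weight (lam : ℝ) (hl : |lam| < 1) (x : ℝ) (q : ℕ) :
    Summable fun n : ℕ => ((n:ℝ)+1)^q * |dff lam x n| / n.factorial := by
  set r : ℝ := (1 + |lam|)/2 with hr
  have hl0 : 0 ≤ |lam| := abs_nonneg _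
  have hr1 : r < 1 := by rw [hr]; linarith
  have hrl : |lam| < r := by rw [hr]; linarith
  apply summable_of_ratio_norm_eventually_le hr1
  have h0 : Filter.Tendsto (fun n : ℕ => 1/((n:ℝ)+1)) Filter.atTop (nhds 0) :=
    tendsto_one_div_add_atTop_nhds_zero_nat
  have h1 : Filter.Tendsto (fun n : ℕ => (1:ℝ) + 1/((n:ℝ)+1)) Filter.atTop (nhds (1+0)) :=
    tendsto_const_nhds.add h0
  have h2 : Filter.Tendsto (fun n : ℕ => |lam| + (|x| - |lam|) * (1/((n:ℝ)+1)))
      Filter.atTop (nhds (|lam| + (|x| - |lam|) * 0)) :=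
    tendsto_const_nhds.add (tendsto_const_nhds.mul h0)
  have hc : Filter.Tendsto
      (fun n : ℕ => (1 + 1/((n:ℝ)+1))^q * (|lam| + (|x| - |lam|) * (1/((n:ℝ)+1))))
      Filter.atTop (nhds |lam|) := by
    have := (h1.pow q).mul h2
    simpa using this
  have hev := hc.eventually_le_const hrl
  filter_upwards [hev] with n hn
  have hA : (0:ℝ) ≤ |dff lam x n| := abs_nonneg _
  have hn1 : (0:ℝ) < (n:ℝ) + 1 := by positivity
  have hf : (0:ℝ) < (n.factorial : ℝ) := by exact_mod_cast n.factorial_pos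
  have hb : |x - (n:ℝ)*lam| ≤ |x| + (n:ℝ)*|lam| := by
    calc |x - (n:ℝ)*lam| = |x + (-((n:ℝ)*lam))| := by ring_nf
    _ ≤ |x| + |(-((n:ℝ)*lam))| := abs_add_le _ _
    _ = |x| + (n:ℝ)*|lam| := by rw [abs_neg, abs_mul, Nat.abs_cast]
  have key : |dff lam x (n+1)| = |dff lam x n| * |x - (n:ℝ)*lam| := by
    rw [dff_succ, abs_mul]
  have habs : ∀ m:ℕ, ‖((m:ℝ)+1)^q * |dff lam x m| / m.factorial‖
      = ((m:ℝ)+1)^q * |dff lam x m| / m.factorial := fun m =>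
    Real.norm_of_nonneg (by positivity)
  rw [habs, habs]
  have hbnd : (0:ℝ) ≤ |x| + (n:ℝ)*|lam| := by positivity
  calc ((↑(n+1):ℝ)+1)^q * |dff lam x (n+1)| / (↑(n+1).factorial)
      ≤ ((↑(n+1):ℝ)+1)^q * (|dff lam x n| * (|x| + (n:ℝ)*|lam|)) / (↑(n+1).factorial) := by
        apply div_le_div_of_nonneg_right ?_ (by positivity)
        rw [key]
        apply mul_le_mul_of_nonneg_left (mul_le_mul_of_nonneg_left hb hA) (by positivity)
    _ = ((1 + 1/((n:ℝ)+1))^q * (|lam| + (|x| - |lam|) * (1/((n:ℝ)+1)))) *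
        (((n:ℝ)+1)^q * |dff lam x n| / n.factorial) := by
        rw [Nat.factorial_succ]
        push_cast
        rw [show (1:ℝ) + 1/((n:ℝ)+1) = ((n:ℝ)+2)/((n:ℝ)+1) by field_simp; ring, div_pow]
        field_simp
        ring
    _ ≤ r * (((n:ℝ)+1)^q * |dff lam x n| / n.factorial) := by
        apply mul_le_mul_of_nonneg_right hn
        positivity

def Efun (lam x : ℝ) : ℝ := ∑' n : ℕ, dff lam x n / n.factorial

lemma summableE (lam : ℝ) (hl : |lam| < 1) (x : ℝ) :
    Summable fun n : ℕ => dff lam x n / n.factorial := by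
  apply Summable.of_norm
  apply Summable.of_nonneg_of_le (fun n => norm_nonneg _)
    (f := fun n : ℕ => ((n:ℝ)+1)^0 * |dff lam x n| / n.factorial)
  · intro n
    simp [Real.norm_eq_abs, abs_div, Nat.abs_cast]
  · exact summable_weight lam hl x 0

lemma hasSumE (lam : ℝ) (hl : |lam| < 1) (x : ℝ) :
    HasSum (fun n : ℕ => dff lam x n / n.factorial) (Efun lam x) :=
  (summableE lam hl x).hasSum

lemma Efun_shift (lam : ℝ) (hl : |lam| < 1) (x : ℝ) :
    Efun lam (x + lam) = (1 + lam) * Efun lam x := by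
  have h1 := hasSumE lam hl x
  have h2 : HasSum (fun n : ℕ => lam * (dff lam x n / n.factorial)) (lam * Efun lam x) :=
    h1.mul_left lam
  set v : ℕ → ℝ := fun n => Nat.rec 0 (fun m _ => lam * (dff lam x m / m.factorial)) n with hv
  have hv0 : v 0 = 0 := rfl
  have hvs : ∀ n : ℕ, v (n+1) = lam * (dff lam x n / n.factorial) := fun n => rfl
  have h3' : HasSum (fun n : ℕ => v (n+1)) (lam * Efun lam x) := by
    simpa only [hvs] using h2
  have h3 : HasSum v (lam * Efun lam x) := by
    have := (hasSum_nat_add_iff (f := v) 1).mp h3'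
    simpa [hv0] using this
  have h4 : HasSum (fun n : ℕ => dff lam x n / n.factorial + v n) (Efun lam x + lam * Efun lam x) :=
    h1.add h3
  have heq : ∀ n : ℕ, dff lam x n / n.factorial + v n = dff lam (x + lam) n / n.factorial := by
    intro n
    cases n with
    | zero => simp [hv0, dff_zero]
    | succ m =>
      rw [hvs]
      have e1 : dff lam (x+lam) (m+1) = (x + lam) * dff lam x m := by
        rw [dff_succ']; ring_nf
      have e2 : dff lam x (m+1) = dff lam x m * (x - m * lam) := dff_succ lam x m
      rw [e1, e2, Nat.factorial_succ]
      have hf : ((m.factorial : ℝ)) ≠ 0 := by positivity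
      have hm : ((m:ℝ)+1) ≠ 0 := by positivity
      push_cast
      field_simp
      ring
  have h5 : HasSum (fun n : ℕ => dff lam (x+lam) n / n.factorial) ((1 + lam) * Efun lam x) := by
    have := h4
    rw [funext heq] at this
    convert this using 1
    ring
  exact h5.tsum_eq

lemma Efun_pow (lam : ℝ) (hl : |lam| < 1) (m : ℕ) :
    (1 + lam)^m * Efun lam (1 - m*lam) = Efun lam 1 := by
  induction m with
  | zero => simp
  | succ k ih =>
    have h : (1 : ℝ) - (k:ℝ)*lam = (1 - ((k:ℕ)+1 : ℕ)*lam) + lam := by push_cast; ring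
    calc (1+lam)^(k+1) * Efun lam (1 - ((k:ℕ)+1:ℕ)*lam)
        = (1+lam)^k * ((1+lam) * Efun lam (1 - ((k:ℕ)+1:ℕ)*lam)) := by ring
      _ = (1+lam)^k * Efun lam (1 - (k:ℝ)*lam) := by
          rw [← Efun_shift lam hl, ← h]
      _ = Efun lam 1 := ih

lemma Efun_neg_pow (lam : ℝ) (hl : |lam| < 1) (m : ℕ) :
    Efun lam (1 - m*lam) = (1 + lam)^(-(m:ℤ)) * Efun lam 1 := by
  have hpos : (0:ℝ) < 1 + lam := by
    have := abs_lt.mp hl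
    linarith [this.1]
  have h := Efun_pow lam hl m
  rw [zpow_neg, zpow_natCast]
  field_simp
  linarith [h]

lemma dStirling_rec (lam : ℝ) (p k : ℕ) :
    dStirling lam (p+1) (k+1) =
      dStirling lam p k + (((k:ℝ)+1) - p*lam) * dStirling lam p (k+1) := by
  set g : ℕ → ℝ := fun j => dff lam j p with hg
  set A : ℝ := ∑ j ∈ Finset.range (k+1), (-1:ℝ)^(k-j) * (Nat.choose k j : ℝ) * g j with hA
  set B : ℝ := ∑ j ∈ Finset.range (k+2), (-1:ℝ)^(k+1-j) * (Nat.choose (k+1) j : ℝ) * g j with hB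
  have hchoose : ∀ j ∈ Finset.range (k+2),
      (j:ℝ) * (Nat.choose (k+1) j : ℝ)
        = ((k:ℝ)+1) * ((Nat.choose (k+1) j : ℝ) - (Nat.choose k j : ℝ)) := by
    intro j hj
    match j with
    | 0 => simp
    | (i+1) =>
      have h1 : (k+1) * Nat.choose k i = Nat.choose (k+1) (i+1) * (i+1) :=
        Nat.add_one_mul_choose_eq k i
      have h2 : Nat.choose (k+1) (i+1) = Nat.choose k i + Nat.choose k (i+1) :=
        Nat.choose_succ_succ k i
      have h1' : ((k:ℝ)+1) * (Nat.choose k i : ℝ) = (Nat.choose (k+1) (i+1) : ℝ) * ((i:ℝ)+1) := by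
        exact_mod_cast h1
    
      have h2' : (Nat.choose (k+1) (i+1) : ℝ) = (Nat.choose k i : ℝ) + (Nat.choose k (i+1) : ℝ) := by
        exact_mod_cast h2
      push_cast
      rw [h2'] at h1' ⊢
      linarith
  have hC : ∑ j ∈ Finset.range (k+2), (-1:ℝ)^(k+1-j) * (Nat.choose k j : ℝ) * g j = -A := by
    rw [Finset.sum_range_succ]
    have hz : (Nat.choose k (k+1) : ℝ) = 0 := by
      rw [Nat.choose_eq_zero_of_lt (by omega)]; simp
    rw [hz]
    rw [hA, ← Finset.sum_neg_distrib]
    rw [Finset.sum_congr rfl (fun j hj => ?_)]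
    · ring
    · have hjk : j ≤ k := by
        have := Finset.mem_range.mp hj; omega
      have : k + 1 - j = (k - j) + 1 := by omega
      rw [this, pow_succ]
      ring
  have claim : ∑ j ∈ Finset.range (k+2), (-1:ℝ)^(k+1-j) * (Nat.choose (k+1) j : ℝ) * dff lam j (p+1)
      = ((k:ℝ)+1) * A + (((k:ℝ)+1) - p*lam) * B := by
    have hsplit : ∀ j ∈ Finset.range (k+2),
        (-1:ℝ)^(k+1-j) * (Nat.choose (k+1) j : ℝ) * dff lam j (p+1)
          = ((k:ℝ)+1) * ((-1:ℝ)^(k+1-j) * (Nat.choose (k+1) j : ℝ) * g j)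
            - ((k:ℝ)+1) * ((-1:ℝ)^(k+1-j) * (Nat.choose k j : ℝ) * g j)
            - (p*lam) * ((-1:ℝ)^(k+1-j) * (Nat.choose (k+1) j : ℝ) * g j) := by
      intro j hj
      have hd : dff lam (j:ℝ) (p+1) = dff lam (j:ℝ) p * ((j:ℝ) - p*lam) := dff_succ lam j p
      rw [hd]
      have := hchoose j hj
      have expand : (-1:ℝ)^(k+1-j) * (Nat.choose (k+1) j : ℝ) * (g j * ((j:ℝ) - p*lam))
          = (-1:ℝ)^(k+1-j) * ((j:ℝ) * (Nat.choose (k+1) j : ℝ)) * g j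
            - (p*lam) * ((-1:ℝ)^(k+1-j) * (Nat.choose (k+1) j : ℝ) * g j) := by ring
      rw [hg] at expand ⊢
      rw [expand, this]
      ring
    rw [Finset.sum_congr rfl hsplit, Finset.sum_sub_distrib, Finset.sum_sub_distrib,
      ← Finset.mul_sum, ← Finset.mul_sum, ← Finset.mul_sum, hC]
    rw [← hB]
    ring
  unfold dStirling
  rw [← hA]
  have e2 : ∑ j ∈ Finset.range (k+1+1), (-1:ℝ)^(k+1-j) * ((k+1).choose j : ℝ) * dff lam j p = B := by
    rw [hB]
  have e3 : ∑ j ∈ Finset.range (k+1+1), (-1:ℝ)^(k+1-j) * ((k+1).choose j : ℝ) * dff lam j (p+1)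
      = ((k:ℝ)+1) * A + (((k:ℝ)+1) - p*lam) * B := claim
  rw [e2, e3]
  have hfac : (((k+1).factorial : ℕ) : ℝ) = ((k:ℝ)+1) * (k.factorial : ℝ) := by
    rw [Nat.factorial_succ]; push_cast; ring
  rw [hfac]
  have h1 : ((k.factorial : ℕ) : ℝ) ≠ 0 := by positivity
  have h2 : ((k:ℝ)+1) ≠ 0 := by positivity
  field_simp

lemma dff_zero_left (lam : ℝ) (n : ℕ) : dff lam 0 (n+1) = 0 := by
  rw [dff_succ']; ring

lemma dStirling_zero_right (lam : ℝ) (n : ℕ) : dStirling lam n 0 = dff lam 0 n := by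
  simp [dStirling]

lemma dStirling_eq_zero (lam : ℝ) (p : ℕ) : ∀ k, p < k → dStirling lam p k = 0 := by
  induction p with
  | zero =>
    intro k hk
    obtain ⟨m, rfl⟩ : ∃ m, k = m + 1 := ⟨k - 1, by omega⟩
    unfold dStirling
    have : ∀ j ∈ Finset.range (m+1+1), (-1:ℝ)^(m+1-j) * ((m+1).choose j : ℝ) * dff lam j 0
        = (-1:ℝ)^(m+1) * ((-1:ℝ)^j * ((m+1).choose j : ℝ)) := by
      intro j hj
      have hj' : j ≤ m + 1 := by have := Finset.mem_range.mp hj; omega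
      have hs : (-1:ℝ)^(m+1-j) * (-1:ℝ)^j = (-1:ℝ)^(m+1) := by
        rw [← pow_add]
        congr 1
        omega
      have hsq : ((-1:ℝ)^j)^2 = 1 := by
        rw [← pow_mul, pow_mul']
        simp
      have hkey : (-1:ℝ)^(m+1-j) = (-1)^(m+1) * (-1)^j := by
        calc (-1:ℝ)^(m+1-j) = (-1:ℝ)^(m+1-j) * ((-1:ℝ)^j)^2 := by rw [hsq]; ring
          _ = ((-1:ℝ)^(m+1-j) * (-1:ℝ)^j) * (-1:ℝ)^j := by ring
          _ = (-1:ℝ)^(m+1) * (-1:ℝ)^j := by rw [hs]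
      rw [dff_zero, hkey]
      ring
    rw [Finset.sum_congr rfl this, ← Finset.mul_sum]
    have hbin : ∑ j ∈ Finset.range (m+1+1), (-1:ℝ)^j * ((m+1).choose j : ℝ) = 0 := by
      have h := Int.alternating_sum_range_choose_of_ne (n := m+1) (by omega)
      have := congrArg (fun z : ℤ => (z : ℝ)) h
      push_cast at this
      convert this using 2
    rw [hbin]
    ring
  | succ p ih =>
    intro k hk
    obtain ⟨m, rfl⟩ : ∃ m, k = m + 1 := ⟨k - 1, by omega⟩
    rw [dStirling_rec, ih m (by omega), ih (m+1) (by omega)]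
    ring

lemma dff_expand (lam x : ℝ) (p : ℕ) :
    dff lam x p = ∑ k ∈ Finset.range (p+1), dStirling lam p k * dff 1 x k := by
  induction p generalizing x with
  | zero => simp [dff_zero, dStirling, dff]
  | succ p ih =>
    rw [Finset.sum_range_succ']
    have h0 : dStirling lam (p+1) 0 * dff 1 x 0 = 0 := by
      rw [dStirling_zero_right, dff_zero_left, dff_zero]; ring
    rw [h0, add_zero]
    have hrec : ∀ i ∈ Finset.range (p+1),
        dStirling lam (p+1) (i+1) * dff 1 x (i+1)
          = dStirling lam p i * dff 1 x (i+1)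
            + (((i:ℝ)+1) - p*lam) * dStirling lam p (i+1) * dff 1 x (i+1) := by
      intro i _
      rw [dStirling_rec]
      ring
    rw [Finset.sum_congr rfl hrec, Finset.sum_add_distrib]
    have hsecond : ∑ i ∈ Finset.range (p+1),
        (((i:ℝ)+1) - p*lam) * dStirling lam p (i+1) * dff 1 x (i+1)
        = ∑ k ∈ Finset.range (p+1), ((k:ℝ) - p*lam) * dStirling lam p k * dff 1 x k := by
      rw [Finset.sum_range_succ, dStirling_eq_zero lam p (p+1) (by omega)]
      rw [Finset.sum_range_succ' (fun k => ((k:ℝ) - p*lam) * dStirling lam p k * dff 1 x k) p]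
      have hz : ((0:ℕ):ℝ) - p*lam = -(p*lam) := by push_cast; ring
      have hlast : (((0:ℕ):ℝ) - (p:ℝ)*lam) * dStirling lam p 0 * dff 1 x 0 = 0 := by
        cases p with
        | zero => simp
        | succ q =>
          rw [dStirling_zero_right, dff_zero_left]
          ring
      rw [hlast]
      push_cast
      ring
    rw [hsecond]
    have hterm : ∀ k ∈ Finset.range (p+1),
        dStirling lam p k * dff 1 x (k+1) + ((k:ℝ) - p*lam) * dStirling lam p k * dff 1 x k
          = (dStirling lam p k * dff 1 x k) * (x - p*lam) := by
      intro k _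
      rw [dff_succ]
      ring
    rw [← Finset.sum_add_distrib, Finset.sum_congr rfl hterm, ← Finset.sum_mul, ← ih, ← dff_succ]

lemma dff_one_add (x : ℝ) (k : ℕ) :
    dff 1 (x+1) (k+1) = dff 1 x (k+1) + ((k:ℝ)+1) * dff 1 x k := by
  have h1 : dff 1 (x+1) (k+1) = (x+1) * dff 1 x k := by
    rw [dff_succ']; ring_nf
  have h2 : dff 1 x (k+1) = dff 1 x k * (x - k) := by
    rw [dff_succ]; ring_nf
  rw [h1, h2]; ring

lemma hockey (k m : ℕ) :
    ((k:ℝ)+1) * ∑ n ∈ Finset.range m, dff 1 (n:ℝ) k = dff 1 (m:ℝ) (k+1) := by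
  induction m with
  | zero => simp [dff_zero_left]
  | succ m ih =>
    rw [Finset.sum_range_succ, mul_add, ih]
    have : ((m+1 : ℕ):ℝ) = (m:ℝ) + 1 := by push_cast; ring
    rw [this, dff_one_add]

lemma dff_nat_vanish (m n : ℕ) (h : m < n) : dff 1 (m:ℝ) n = 0 := by
  apply Finset.prod_eq_zero (Finset.mem_range.mpr h)
  simp

lemma dff_fact (k j : ℕ) :
    dff 1 ((j+k+1 : ℕ) : ℝ) (k+1) * (j.factorial : ℝ) = ((j+k+1).factorial : ℝ) := by
  induction k with
  | zero =>
    have : dff 1 ((j+0+1 : ℕ) : ℝ) 1 = (j:ℝ)+1 := by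
      rw [show (1:ℕ) = 0 + 1 from rfl, dff_succ, dff_zero]
      push_cast; ring
    rw [this, show j+0+1 = j+1 from rfl, Nat.factorial_succ]
    push_cast; ring
  | succ k ih =>
    have h1 : dff 1 ((j+(k+1)+1 : ℕ) : ℝ) (k+2) = ((j+(k+1)+1 : ℕ) : ℝ) * dff 1 ((j+k+1:ℕ):ℝ) (k+1) := by
      rw [dff_succ']
      congr 1
      · push_cast; ring_nf
    rw [h1, show j+(k+1)+1 = (j+k+1)+1 from rfl, Nat.factorial_succ]
    push_cast at ih ⊢
    nlinarith [ih]

lemma hasSum_factB (lam : ℝ) (hl : |lam| < 1) (k : ℕ) :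
    HasSum (fun m : ℕ => dff 1 (m:ℝ) (k+1) * (dff lam 1 m / m.factorial))
      (dff lam 1 (k+1) * Efun lam (1 - ((k:ℝ)+1)*lam)) := by
  set c : ℝ := 1 - ((k:ℝ)+1)*lam with hc
  set f : ℕ → ℝ := fun m => dff 1 (m:ℝ) (k+1) * (dff lam 1 m / m.factorial) with hf
  have hshift : HasSum (fun j : ℕ => f (j + (k+1)))
      (dff lam 1 (k+1) * Efun lam c) := by
    have hE := (hasSumE lam hl c).mul_left (dff lam 1 (k+1))
    have heq : ∀ j : ℕ, f (j + (k+1)) = dff lam 1 (k+1) * (dff lam c j / j.factorial) := by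
      intro j
      have hfact : ((j+k+1).factorial : ℝ) ≠ 0 := by positivity
      have hjf : ((j).factorial : ℝ) ≠ 0 := by positivity
      have hD : dff 1 ((j+k+1 : ℕ):ℝ) (k+1) = ((j+k+1).factorial : ℝ) / (j.factorial : ℝ) := by
        rw [eq_div_iff hjf]
        exact dff_fact k j
      have hsplit : dff lam 1 (j+k+1) = dff lam 1 (k+1) * dff lam c j := by
        have := dff_add lam 1 (k+1) j
        rw [show (k+1)+j = j+k+1 from by omega] at this
        rw [this, hc]
        push_cast
        ring_nf
      rw [hf]
      simp only []
      rw [show j + (k+1) = j+k+1 from by omega, hD, hsplit]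
      field_simp
    rw [funext heq]
    exact hE
  have hzero : ∑ i ∈ Finset.range (k+1), f i = 0 := by
    apply Finset.sum_eq_zero
    intro i hi
    rw [hf]
    simp only []
    rw [dff_nat_vanish i (k+1) (Finset.mem_range.mp hi)]
    ring
  have h2 : HasSum (fun n : ℕ => f (n + (k+1)))
      (dff lam 1 (k+1) * Efun lam c - ∑ i ∈ Finset.range (k+1), f i) := by
    rw [hzero, sub_zero]; exact hshift
  exact (hasSum_nat_add_iff' (k+1)).mp h2

lemma dexp_one (lam : ℝ) : dexp lam 1 = Efun lam 1 := by
  unfold dexp Efun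
  exact tsum_congr fun n => by rw [one_pow, mul_one]

lemma dtail_one (lam : ℝ) (n : ℕ) :
    dtail lam 1 n = Efun lam 1 - ∑ k ∈ Finset.range (n+1), dff lam 1 k / k.factorial := by
  unfold dtail
  rw [dexp_one]
  congr 1
  exact Finset.sum_congr rfl fun k _ => by rw [one_pow, mul_one]

lemma summable_G (lam : ℝ) (hl : |lam| < 1) (p : ℕ) :
    Summable (fun q : ℕ × ℕ =>
      if q.2 < q.1 then dff lam (q.2:ℝ) p * (dff lam 1 q.1 / q.1.factorial) else 0) := by
  set G : ℕ × ℕ → ℝ := fun q =>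
    if q.2 < q.1 then dff lam (q.2:ℝ) p * (dff lam 1 q.1 / q.1.factorial) else 0 with hG
  apply Summable.of_abs
  have habs_nonneg : 0 ≤ fun q : ℕ × ℕ => |G q| := fun q => abs_nonneg _
  rw [summable_prod_of_nonneg habs_nonneg]
  constructor
  · intro m
    apply summable_of_ne_finset_zero (s := Finset.range m)
    intro n hn
    have : ¬ n < m := by simpa using hn
    simp only [hG, this, if_false, abs_zero]
  · have htsum : ∀ m : ℕ, ∑' n, |G (m, n)| = ∑ n ∈ Finset.range m, |G (m, n)| := by
      intro m
      apply tsum_eq_sum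
      intro n hn
      have : ¬ n < m := by simpa using hn
      simp only [hG, this, if_false, abs_zero]
    have hboundsum : Summable (fun m : ℕ =>
        ((p:ℝ)+1)^(p+1) * (((m:ℝ)+1)^(p+1) * |dff lam 1 m| / m.factorial)) :=
      (summable_weight lam hl 1 (p+1)).mul_left _
    apply Summable.of_nonneg_of_le (fun m => ?_) (fun m => ?_) hboundsum
    · rw [htsum m]
      exact Finset.sum_nonneg fun n _ => abs_nonneg _
    · rw [htsum m]
      have hX : (0:ℝ) ≤ |dff lam 1 m| / m.factorial := by positivity
      have hbd : ∀ n ∈ Finset.range m, |G (m, n)| ≤ ((m:ℝ)+p)^p * (|dff lam 1 m| / m.factorial) := by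
        intro n hn
        have hnm : n < m := Finset.mem_range.mp hn
        simp only [hG, hnm, if_true]
        rw [abs_mul, abs_div, Nat.abs_cast]
        apply mul_le_mul_of_nonneg_right ?_ hX
        unfold dff
        rw [Finset.abs_prod]
        calc ∏ i ∈ Finset.range p, |(n:ℝ) - i * lam|
            ≤ ∏ i ∈ Finset.range p, ((m:ℝ)+p) := by
              apply Finset.prod_le_prod (fun i _ => abs_nonneg _)
              intro i hi
              have hip : i < p := Finset.mem_range.mp hi
              have h1 : |(n:ℝ) - i * lam| ≤ |(n:ℝ)| + |(i:ℝ) * lam| := by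
                calc |(n:ℝ) - i * lam| = |(n:ℝ) + (-((i:ℝ)*lam))| := by ring_nf
                _ ≤ |(n:ℝ)| + |(-((i:ℝ)*lam))| := abs_add_le _ _
                _ = |(n:ℝ)| + |(i:ℝ) * lam| := by rw [abs_neg]
              have h2 : |(n:ℝ)| = (n:ℝ) := Nat.abs_cast n
              have h3 : |(i:ℝ) * lam| ≤ (i:ℝ) := by
                rw [abs_mul, Nat.abs_cast]
                calc (i:ℝ) * |lam| ≤ (i:ℝ) * 1 := by
                      apply mul_le_mul_of_nonneg_left (le_of_lt hl) (by positivity)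
                  _ = (i:ℝ) := by ring
              have h4 : (n:ℝ) ≤ (m:ℝ) := by exact_mod_cast Nat.le_of_lt hnm
              have h5 : (i:ℝ) ≤ (p:ℝ) := by exact_mod_cast Nat.le_of_lt hip
              linarith
          _ = ((m:ℝ)+p)^p := by rw [Finset.prod_const, Finset.card_range]
      calc ∑ n ∈ Finset.range m, |G (m, n)|
          ≤ ∑ n ∈ Finset.range m, ((m:ℝ)+p)^p * (|dff lam 1 m| / m.factorial) :=
            Finset.sum_le_sum hbd
        _ = (m:ℝ) * (((m:ℝ)+p)^p * (|dff lam 1 m| / m.factorial)) := by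
            rw [Finset.sum_const, Finset.card_range, nsmul_eq_mul]
        _ ≤ ((m:ℝ)+p)^(p+1) * (|dff lam 1 m| / m.factorial) := by
            rw [pow_succ]
            have : (m:ℝ) ≤ (m:ℝ)+p := by
              have := Nat.cast_nonneg (α := ℝ) p
              linarith
            nlinarith [pow_nonneg (show (0:ℝ) ≤ (m:ℝ)+p by positivity) p, hX,
              mul_nonneg (pow_nonneg (show (0:ℝ) ≤ (m:ℝ)+p by positivity) p) hX]
        _ ≤ ((p:ℝ)+1)^(p+1) * (((m:ℝ)+1)^(p+1) * |dff lam 1 m| / m.factorial) := by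
            have hle : (m:ℝ)+p ≤ ((p:ℝ)+1) * ((m:ℝ)+1) := by nlinarith [Nat.cast_nonneg (α := ℝ) m, Nat.cast_nonneg (α := ℝ) p]
            have := pow_le_pow_left₀ (show (0:ℝ) ≤ (m:ℝ)+p by positivity) hle (p+1)
            rw [mul_pow] at this
            calc ((m:ℝ)+p)^(p+1) * (|dff lam 1 m| / m.factorial)
                ≤ (((p:ℝ)+1)^(p+1) * ((m:ℝ)+1)^(p+1)) * (|dff lam 1 m| / m.factorial) :=
                  mul_le_mul_of_nonneg_right this hX
              _ = ((p:ℝ)+1)^(p+1) * (((m:ℝ)+1)^(p+1) * |dff lam 1 m| / m.factorial) := by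
                  ring

theorem stmt_9 (p : ℕ) (lam : ℝ) (hl : |lam| < 1) :
    HasSum (fun n : ℕ => dff lam n p * dtail lam 1 n)
      (∑ k ∈ Finset.range (p + 1), dStirling lam p k * (dff lam 1 (k + 1) / (k + 1)) *
        (1 + lam) ^ (-(k + 1 : ℤ)) * dexp lam 1) := by
  set f1 : ℕ → ℝ := fun m => dff lam 1 m / m.factorial with hf1
  set G : ℕ × ℕ → ℝ := fun q =>
    if q.2 < q.1 then dff lam (q.2:ℝ) p * (dff lam 1 q.1 / q.1.factorial) else 0 with hG
  have hsum : Summable G := summable_G lam hl p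
  have hHS : HasSum G (∑' q, G q) := hsum.hasSum
  set T := ∑' q, G q with hT
  -- grouping over first coordinate m
  have hfib_m : ∀ m : ℕ, HasSum (fun n => G (m, n))
      ((∑ n ∈ Finset.range m, dff lam (n:ℝ) p) * f1 m) := by
    intro m
    have h0 : ∀ n ∉ Finset.range m, G (m, n) = 0 := by
      intro n hn
      have : ¬ n < m := by simpa using hn
      simp only [hG, this, if_false]
    have h := hasSum_sum_of_ne_finset_zero (L := SummationFilter.unconditional ℕ) (s := Finset.range m) h0
    have he : ∑ n ∈ Finset.range m, G (m, n)
        = (∑ n ∈ Finset.range m, dff lam (n:ℝ) p) * f1 m := by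
      rw [Finset.sum_mul]
      apply Finset.sum_congr rfl
      intro n hn
      have hnm : n < m := Finset.mem_range.mp hn
      simp only [hG, hnm, if_true, hf1]
    rwa [he] at h
  have hm : HasSum (fun m => (∑ n ∈ Finset.range m, dff lam (n:ℝ) p) * f1 m) T :=
    hHS.prod_fiberwise hfib_m
  -- rewrite the inner finite sum using Stirling expansion and hockey stick
  have hfun : (fun m : ℕ => (∑ n ∈ Finset.range m, dff lam (n:ℝ) p) * f1 m)
      = fun m : ℕ => ∑ k ∈ Finset.range (p+1),
          (dStirling lam p k * (1/((k:ℝ)+1))) * (dff 1 (m:ℝ) (k+1) * f1 m) := by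
    funext m
    have h1 : ∑ n ∈ Finset.range m, dff lam (n:ℝ) p
        = ∑ k ∈ Finset.range (p+1), dStirling lam p k * (dff 1 (m:ℝ) (k+1) * (1/((k:ℝ)+1))) := by
      rw [Finset.sum_congr rfl (fun (n : ℕ) (_ : n ∈ Finset.range m) => dff_expand lam n p), Finset.sum_comm]
      apply Finset.sum_congr rfl
      intro k _
      rw [← Finset.mul_sum]
      have hk : ((k:ℝ)+1) ≠ 0 := by positivity
      have hh := hockey k m
      rw [← hh]
      field_simp
    rw [h1, Finset.sum_mul]
    apply Finset.sum_congr rfl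
    intro k _
    ring
  rw [hfun] at hm
  -- per-k series value
  have hRk : ∀ k ∈ Finset.range (p+1),
      HasSum (fun m : ℕ => (dStirling lam p k * (1/((k:ℝ)+1))) * (dff 1 (m:ℝ) (k+1) * f1 m))
        ((dStirling lam p k * (1/((k:ℝ)+1))) *
          (dff lam 1 (k+1) * ((1+lam)^(-(k+1:ℤ)) * Efun lam 1))) := by
    intro k _
    have h := hasSum_factB lam hl k
    have hc : (1:ℝ) - ((k:ℝ)+1)*lam = 1 - (((k+1:ℕ)):ℝ)*lam := by push_cast; ring
    rw [hc, Efun_neg_pow lam hl (k+1)] at h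
    have hz : (-((k+1:ℕ):ℤ)) = (-(k+1:ℤ)) := by push_cast; ring
    rw [hz] at h
    exact h.mul_left _
  have hsum2 := hasSum_sum hRk
  have hTeq : T = ∑ k ∈ Finset.range (p+1),
      (dStirling lam p k * (1/((k:ℝ)+1))) *
        (dff lam 1 (k+1) * ((1+lam)^(-(k+1:ℤ)) * Efun lam 1)) := hm.unique hsum2
  -- grouping over second coordinate n
  have hswap : HasSum (fun q : ℕ × ℕ => G (q.2, q.1)) T := by
    have := ((Equiv.prodComm ℕ ℕ).hasSum_iff (f := G) (a := T)).mpr hHS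
    exact this
  have hfib_n : ∀ n : ℕ, HasSum (fun m => G (m, n))
      (dff lam (n:ℝ) p * (Efun lam 1 - ∑ i ∈ Finset.range (n+1), f1 i)) := by
    intro n
    have hE1 : HasSum f1 (Efun lam 1) := hasSumE lam hl 1
    set u : ℕ → ℝ := fun m => if m < n+1 then f1 m else 0 with hu
    have hu0 : ∀ m ∉ Finset.range (n+1), u m = 0 := by
      intro m hm'
      have : ¬ m < n+1 := by simpa using hm'
      simp only [hu, this, if_false]
    have husum : HasSum u (∑ i ∈ Finset.range (n+1), f1 i) := by
      have h := hasSum_sum_of_ne_finset_zero (L := SummationFilter.unconditional ℕ) (s := Finset.range (n+1)) hu0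
      have he : ∑ m ∈ Finset.range (n+1), u m = ∑ i ∈ Finset.range (n+1), f1 i := by
        apply Finset.sum_congr rfl
        intro m hm'
        have : m < n+1 := Finset.mem_range.mp hm'
        simp only [hu, this, if_true]
      rwa [he] at h
    have hsub := (hE1.sub husum).mul_left (dff lam (n:ℝ) p)
    have he2 : (fun m => dff lam (n:ℝ) p * (f1 m - u m)) = fun m => G (m, n) := by
      funext m
      by_cases hmn : n < m
      · have : ¬ m < n+1 := by omega
        simp only [hG, hu, hmn, this, if_true, if_false, hf1]
        ring
      · have : m < n+1 := by omega
        simp only [hG, hu, hmn, this, if_true, if_false]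
        ring
    rwa [he2] at hsub
  have hn : HasSum (fun n : ℕ => dff lam (n:ℝ) p *
      (Efun lam 1 - ∑ i ∈ Finset.range (n+1), f1 i)) T :=
    hswap.prod_fiberwise hfib_n
  -- conclude
  have hgoalfun : (fun n : ℕ => dff lam (n:ℝ) p * dtail lam 1 n)
      = fun n : ℕ => dff lam (n:ℝ) p * (Efun lam 1 - ∑ i ∈ Finset.range (n+1), f1 i) := by
    funext n
    rw [dtail_one]
  have hRHS : (∑ k ∈ Finset.range (p + 1), dStirling lam p k * (dff lam 1 (k + 1) / (k + 1)) *
        (1 + lam) ^ (-(k + 1 : ℤ)) * dexp lam 1) = T := by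
    rw [hTeq]
    apply Finset.sum_congr rfl
    intro k _
    rw [dexp_one]
    ring
  rw [hgoalfun, hRHS]
  exact hn
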